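/- Let c > 0 be a real number. For every real x with |x| < c/2, the series Σ_{n=0}^{∞} (−1)^n · cos( (2n+1) π x / c ) / (2n+1) converges and its sum equals π/4. -/

import Mathlib

open Real Filter intervalIntegral in
lemma aux_sum_sin_16 (N : ℕ) (t : ℝ) :
    (∑ n ∈ Finset.range N, (-1:ℝ)^n * Real.sin ((2*n+1)*t)) * (2 * Real.cos t)
      = (-1:ℝ)^(N+1) * Real.sin (2*N*t) := by
  induction N with
  | zero => simp
  | succ N ih =>
    rw [Finset.sum_range_succ, add_mul, ih]
    have e1 : (2*((N:ℝ)+1))*t = ((2*(N:ℝ)+1)*t) + t := by ring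
    have e2 : (2*(N:ℝ))*t = ((2*(N:ℝ)+1)*t) - t := by ring
    push_cast
    rw [e1, e2, Real.sin_add, Real.sin_sub]
    ring

open Real Filter in
theorem statement_16 (c : ℝ) (hc : 0 < c) (x : ℝ) (hx : |x| < c / 2) :
    Tendsto (fun N : ℕ => ∑ n ∈ Finset.range N,
        (-1 : ℝ) ^ n * Real.cos ((2 * n + 1) * π * x / c) / (2 * n + 1))
      atTop (nhds (π / 4)) := by
  set θ : ℝ := π * x / c with hθdef
  have hθ : |θ| < π / 2 := by
    have h1 : |θ| = π * |x| / c := by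
      rw [hθdef, abs_div, abs_mul, abs_of_pos pi_pos, abs_of_pos hc]
    rw [h1, div_lt_iff₀ hc]
    nlinarith [pi_pos, mul_lt_mul_of_pos_left hx pi_pos]
  have hθ' : -(π/2) < θ ∧ θ < π/2 := abs_lt.mp hθ
  have hb : 0 < Real.cos θ := Real.cos_pos_of_mem_Ioo ⟨hθ'.1, hθ'.2⟩
  set b : ℝ := Real.cos θ with hbdef
  have hcos_ge : ∀ t ∈ Set.uIcc (0:ℝ) θ, b ≤ Real.cos t := by
    intro t ht
    have habs : |t| ≤ |θ| := by
      rcases Set.mem_uIcc.mp ht with ⟨h1, h2⟩ | ⟨h1, h2⟩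
      · rw [abs_of_nonneg h1]; exact le_trans h2 (le_abs_self θ)
      · rw [abs_of_nonpos h2]; exact le_trans (neg_le_neg h1) (neg_le_abs θ)
    calc b = Real.cos |θ| := by rw [hbdef, Real.cos_abs]
    _ ≤ Real.cos |t| := by
        apply Real.cos_le_cos_of_nonneg_of_le_pi (abs_nonneg t) _ habs
        linarith [hθ, pi_pos]
    _ = Real.cos t := Real.cos_abs t
  have hcos_ne : ∀ t ∈ Set.uIcc (0:ℝ) θ, Real.cos t ≠ 0 :=
    fun t ht => ne_of_gt (lt_of_lt_of_le hb (hcos_ge t ht))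
  set g : ℕ → ℝ := fun N => ∫ t in (0:ℝ)..θ, (2 * Real.cos t)⁻¹ * Real.sin (2*N*t)
    with hgdef
  have hS : ∀ N : ℕ, (∑ n ∈ Finset.range N,
      (-1 : ℝ) ^ n * Real.cos ((2 * n + 1) * π * x / c) / (2 * n + 1))
      = (∑ n ∈ Finset.range N, (-1 : ℝ) ^ n / (2 * n + 1)) + (-1:ℝ)^N * g N := by
    intro N
    have hint : ∀ n : ℕ, ∫ t in (0:ℝ)..θ, Real.sin ((2*n+1)*t)
        = (1 - Real.cos ((2*n+1)*θ)) / (2*n+1) := by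
      intro n
      have hk : (2*(n:ℝ)+1) ≠ 0 := by positivity
      rw [intervalIntegral.integral_comp_mul_left Real.sin hk, mul_zero,
        integral_sin, Real.cos_zero, smul_eq_mul]
      field_simp
    have hterm : ∀ n : ℕ, (-1 : ℝ) ^ n * Real.cos ((2 * n + 1) * π * x / c) / (2 * n + 1)
        = (-1:ℝ)^n / (2*n+1) - (-1:ℝ)^n * ∫ t in (0:ℝ)..θ, Real.sin ((2*n+1)*t) := by
      intro n
      have harg : (2 * (n:ℝ) + 1) * π * x / c = (2*n+1)*θ := by
        rw [hθdef]; ring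
      rw [harg, hint n]
      have hk : (2*(n:ℝ)+1) ≠ 0 := by positivity
      field_simp
      ring
    rw [Finset.sum_congr rfl (fun n _ => hterm n), Finset.sum_sub_distrib, sub_eq_add_neg]
    congr 1
    have hic : ∀ n : ℕ, IntervalIntegrable (fun t => (-1:ℝ)^n * Real.sin ((2*n+1)*t))
        MeasureTheory.volume 0 θ :=
      fun n => (Continuous.intervalIntegrable (by fun_prop) 0 θ)
    calc -(∑ n ∈ Finset.range N, (-1:ℝ)^n * ∫ t in (0:ℝ)..θ, Real.sin ((2*n+1)*t))
        = -∫ t in (0:ℝ)..θ, ∑ n ∈ Finset.range N, (-1:ℝ)^n * Real.sin ((2*n+1)*t) := by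
          rw [intervalIntegral.integral_finset_sum (fun n _ => hic n)]
          congr 1
          exact Finset.sum_congr rfl fun n _ =>
            (intervalIntegral.integral_const_mul _ _).symm
      _ = -∫ t in (0:ℝ)..θ, (-1:ℝ)^(N+1) * ((2 * Real.cos t)⁻¹ * Real.sin (2*N*t)) := by
          congr 1
          apply intervalIntegral.integral_congr
          intro t ht
          have h2 : (2 * Real.cos t) ≠ 0 := by
            simpa using hcos_ne t ht
          have hkey := aux_sum_sin_16 N t
          beta_reduce
          rw [mul_left_comm, ← hkey, mul_comm (∑ n ∈ Finset.range N, (-1:ℝ)^n * Real.sin ((2*n+1)*t)), inv_mul_cancel_left₀ h2]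
      _ = (-1:ℝ)^N * g N := by
          rw [intervalIntegral.integral_const_mul, hgdef]
          simp [pow_succ]
  have hg0 : Tendsto (fun N : ℕ => (-1:ℝ)^N * g N) atTop (nhds 0) := by
    set C : ℝ := 1/(2*b) + |θ|/(4*b^2) with hCdef
    refine squeeze_zero_norm' (a := fun N : ℕ => C / N) ?_
      (tendsto_const_div_atTop_nhds_zero_nat C)
    · filter_upwards [eventually_ge_atTop 1] with N hN
      have hN0 : (0:ℝ) < (N:ℝ) := by exact_mod_cast hN
      set k : ℝ := 2*N with hkdef
      have hk0 : 0 < k := by positivity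
      have hu : ∀ t ∈ Set.uIcc (0:ℝ) θ,
          HasDerivAt (fun t => (2 * Real.cos t)⁻¹) (Real.sin t / (2 * Real.cos t ^ 2)) t := by
        intro t ht
        have h2 : (2 * Real.cos t) ≠ 0 := by simpa using hcos_ne t ht
        have hd := ((Real.hasDerivAt_cos t).const_mul 2).inv h2
        refine hd.congr_deriv ?_
        have hct := hcos_ne t ht
        ring
      have hv : ∀ t ∈ Set.uIcc (0:ℝ) θ,
          HasDerivAt (fun t => -Real.cos (k*t) / k) (Real.sin (k*t)) t := by
        intro t _
        have h1 : HasDerivAt (fun t : ℝ => k*t) k t := by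
          simpa using (hasDerivAt_id t).const_mul k
        have hd := ((Real.hasDerivAt_cos (k*t)).comp t h1).neg.div_const k
        refine hd.congr_deriv ?_
        field_simp [hk0.ne']
      have hu' : IntervalIntegrable (fun t => Real.sin t / (2 * Real.cos t ^ 2))
          MeasureTheory.volume 0 θ := by
        apply ContinuousOn.intervalIntegrable
        apply ContinuousOn.div Real.continuous_sin.continuousOn (by fun_prop)
        intro t ht
        have := hcos_ne t ht
        positivity
      have hv' : IntervalIntegrable (fun t => Real.sin (k*t)) MeasureTheory.volume 0 θ :=
        Continuous.intervalIntegrable (by fun_prop) 0 θ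
      have hibp := intervalIntegral.integral_mul_deriv_eq_deriv_mul hu hv hu' hv'
      have hgN : g N = (2 * Real.cos θ)⁻¹ * (-Real.cos (k*θ) / k)
          - (2 * Real.cos 0)⁻¹ * (-Real.cos (k*0) / k)
          - ∫ t in (0:ℝ)..θ, Real.sin t / (2 * Real.cos t ^ 2) * (-Real.cos (k*t) / k) := by
        rw [hgdef]
        simp only [hkdef] at hibp ⊢
        convert hibp using 2
      -- boundary bounds
      have hbdry : ∀ τ ∈ Set.uIcc (0:ℝ) θ,
          |(2 * Real.cos τ)⁻¹ * (-Real.cos (k*τ) / k)| ≤ (2*b)⁻¹ * k⁻¹ := by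
        intro τ hτ
        have h1 : |(2 * Real.cos τ)⁻¹| ≤ (2*b)⁻¹ := by
          rw [abs_inv, abs_of_pos (by linarith [hcos_ge τ hτ] : (0:ℝ) < 2 * Real.cos τ)]
          apply inv_anti₀ (by positivity)
          linarith [hcos_ge τ hτ]
        have h2 : |(-Real.cos (k*τ) / k)| ≤ k⁻¹ := by
          rw [abs_div, abs_neg, abs_of_pos hk0]
          rw [div_le_iff₀ hk0, inv_mul_cancel₀ (ne_of_gt hk0)]
          exact Real.abs_cos_le_one _
        rw [abs_mul]
        exact mul_le_mul h1 h2 (abs_nonneg _) (by positivity)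
      have hintbd : |∫ t in (0:ℝ)..θ, Real.sin t / (2 * Real.cos t ^ 2) * (-Real.cos (k*t) / k)|
          ≤ ((2*b^2)⁻¹ * k⁻¹) * |θ| := by
        have := intervalIntegral.norm_integral_le_of_norm_le_const
          (a := 0) (b := θ) (C := (2*b^2)⁻¹ * k⁻¹)
          (f := fun t => Real.sin t / (2 * Real.cos t ^ 2) * (-Real.cos (k*t) / k)) ?_
        · simpa using this
        · intro t ht
          have ht' : t ∈ Set.uIcc (0:ℝ) θ := Set.uIoc_subset_uIcc ht
          have hct := hcos_ge t ht'
          have h1 : |Real.sin t / (2 * Real.cos t ^ 2)| ≤ (2*b^2)⁻¹ := by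
            rw [abs_div, abs_of_pos (by nlinarith : (0:ℝ) < 2 * Real.cos t ^ 2), ← one_div]
            exact div_le_div₀ (by norm_num) (Real.abs_sin_le_one t) (by positivity)
              (by nlinarith)
          have h2 : |(-Real.cos (k*t) / k)| ≤ k⁻¹ := by
            rw [abs_div, abs_neg, abs_of_pos hk0]
            rw [div_le_iff₀ hk0, inv_mul_cancel₀ (ne_of_gt hk0)]
            exact Real.abs_cos_le_one _
          rw [Real.norm_eq_abs, abs_mul]
          exact mul_le_mul h1 h2 (abs_nonneg _) (by positivity)
      have hfinal : |g N| ≤ C / N := by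
        rw [hgN]
        calc |(2 * Real.cos θ)⁻¹ * (-Real.cos (k*θ) / k)
            - (2 * Real.cos 0)⁻¹ * (-Real.cos (k*0) / k)
            - ∫ t in (0:ℝ)..θ, Real.sin t / (2 * Real.cos t ^ 2) * (-Real.cos (k*t) / k)|
            ≤ |(2 * Real.cos θ)⁻¹ * (-Real.cos (k*θ) / k)|
              + |(2 * Real.cos 0)⁻¹ * (-Real.cos (k*0) / k)|
              + |∫ t in (0:ℝ)..θ, Real.sin t / (2 * Real.cos t ^ 2) * (-Real.cos (k*t) / k)| := by
                exact (abs_sub _ _).trans (by gcongr; exact abs_sub _ _)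
          _ ≤ (2*b)⁻¹ * k⁻¹ + (2*b)⁻¹ * k⁻¹ + ((2*b^2)⁻¹ * k⁻¹) * |θ| := by
                exact add_le_add (add_le_add (hbdry θ Set.right_mem_uIcc)
                  (hbdry 0 Set.left_mem_uIcc)) hintbd
          _ = C / N := by
                rw [hCdef, hkdef]
                field_simp
                ring
      calc ‖(-1:ℝ)^N * g N‖ = |g N| := by
            rw [norm_mul, norm_pow, norm_neg, norm_one, one_pow, one_mul]; rfl
        _ ≤ C / N := hfinal
  have hmain := Real.tendsto_sum_pi_div_four.add hg0
  rw [add_zero] at hmain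
  exact hmain.congr fun N => (hS N).symm
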